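/- arXiv:1809.02733 — 2 statements merged into one kernel-verified Lean document; each statement's English description precedes it below -/
import Mathlib

section
/- Every minimal non-nilpotent finite group is soluble; consequently, every finite non-nilpotent group contains a soluble non-nilpotent subgroup. -/
open Subgroup Pointwise

section Aux

variable {G : Type*} [Group G]

lemma map_normalizer_subgroupOf_le {D M : Subgroup G} (hDM : D ≤ M) :
    map M.subtype (normalizer ((D.subgroupOf M : Set M))) ≤ normalizer (D : Set G) := by
  rintro x hx
  rw [Subgroup.mem_map] at hx
  obtain ⟨n, hn, rfl⟩ := hx
  rw [Subgroup.mem_normalizer_iff] at hn ⊢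
  intro b
  constructor
  · intro hb
    have hbM : b ∈ M := hDM hb
    have := (hn ⟨b, hbM⟩).mp (by simpa [Subgroup.mem_subgroupOf] using hb)
    simpa [Subgroup.mem_subgroupOf] using this
  · intro hb
    have hbM : b ∈ M := by
      have h1 : ((n : G) * b * (n : G)⁻¹) ∈ M := hDM hb
      have h2 : (n : G)⁻¹ * ((n : G) * b * (n : G)⁻¹) * (n : G) ∈ M :=
        mul_mem (mul_mem (inv_mem n.2) h1) n.2
      have : (n : G)⁻¹ * ((n : G) * b * (n : G)⁻¹) * (n : G) = b := by group
      rwa [this] at h2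
    have := (hn ⟨b, hbM⟩).mpr (by simpa [Subgroup.mem_subgroupOf] using hb)
    simpa [Subgroup.mem_subgroupOf] using this

lemma conj_smul_eq_map (g : ConjAct G) (M : Subgroup G) :
    g • M = Subgroup.map ((MulAut.conj (ConjAct.ofConjAct g) : G ≃* G) : G →* G) M := by
  ext x
  simp [Subgroup.mem_smul_pointwise_iff_exists, ConjAct.smul_def, MulAut.conj_apply]

lemma isCoatom_conj {M : Subgroup G} (hM : IsCoatom M) (g : ConjAct G) : IsCoatom (g • M) := by
  rw [conj_smul_eq_map]
  exact (OrderIso.isCoatom_iff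
    ((MulAut.conj (ConjAct.ofConjAct g) : G ≃* G).mapSubgroup) M).mpr hM

lemma card_conj (g : ConjAct G) (M : Subgroup G) :
    Nat.card (g • M : Subgroup G) = Nat.card M := by
  rw [conj_smul_eq_map]
  exact (Nat.card_congr ((MulAut.conj (ConjAct.ofConjAct g) : G ≃* G).subgroupMap M).toEquiv).symm

lemma stab_eq_comap_normalizer (M : Subgroup G) :
    MulAction.stabilizer (ConjAct G) M
      = (normalizer (M : Set G)).comap (ConjAct.ofConjAct : ConjAct G ≃* G).toMonoidHom := by
  ext g
  simp only [MulAction.mem_stabilizer_iff, Subgroup.mem_comap, MulEquiv.coe_toMonoidHom,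
    Subgroup.mem_normalizer_iff'']
  constructor
  · intro h x
    have hx : x ∈ g • M ↔ x ∈ M := by rw [h]
    rw [Subgroup.mem_pointwise_smul_iff_inv_smul_mem, ConjAct.smul_def, map_inv, inv_inv] at hx
    exact hx.symm
  · intro h
    ext x
    rw [Subgroup.mem_pointwise_smul_iff_inv_smul_mem, ConjAct.smul_def, map_inv, inv_inv]
    exact (h x).symm

end Aux

section Core

/-- Core step of Schmidt's theorem: a finite group all of whose proper subgroups are
nilpotent, which is "simple" (no nontrivial proper normal subgroups) and noncommutative,
cannot exist. -/
lemma schmidt_core (G : Type) [Group G] [Finite G]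
    (hnil : ∀ H : Subgroup G, H ≠ ⊤ → Group.IsNilpotent H)
    (hns : ∀ N : Subgroup G, N.Normal → N = ⊥ ∨ N = ⊤)
    (hcomm : ¬ ∀ a b : G, a * b = b * a) : False := by
  classical
  letI : Fintype G := Fintype.ofFinite G
  letI : Fintype (Subgroup G) := Fintype.ofFinite _
  -- G is nontrivial
  have hnt : Nontrivial G := by
    by_contra h
    rw [not_nontrivial_iff_subsingleton] at h
    exact hcomm fun a b => Subsingleton.elim _ _
  -- G is not cyclic
  have hcyc : ∀ x : G, zpowers x ≠ ⊤ := by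
    intro x hx
    refine hcomm fun a b => ?_
    have ha : a ∈ zpowers x := hx ▸ Subgroup.mem_top a
    have hb : b ∈ zpowers x := hx ▸ Subgroup.mem_top b
    obtain ⟨i, rfl⟩ := ha
    obtain ⟨j, rfl⟩ := hb
    rw [← zpow_add, ← zpow_add, add_comm]
  -- coatoms are nontrivial
  have coatom_ne_bot : ∀ M : Subgroup G, IsCoatom M → M ≠ ⊥ := by
    rintro M hM rfl
    obtain ⟨x, hx⟩ := exists_ne (1 : G)
    have h1 : zpowers x ≠ ⊥ := by simpa [Subgroup.zpowers_eq_bot] using hx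
    exact hcyc x (hM.2 _ (bot_lt_iff_ne_bot.mpr h1))
  -- coatoms are proper, hence don't contain things like ⊤
  -- coatoms are self-normalizing
  have coatom_selfnorm : ∀ M : Subgroup G, IsCoatom M → normalizer (M : Set G) = M := by
    intro M hM
    rcases (Subgroup.le_normalizer (H := M)).lt_or_eq with h | h
    · exfalso
      have htop : normalizer (M : Set G) = ⊤ := hM.2 _ h
      have hnorm : M.Normal := Subgroup.normalizer_eq_top_iff.mp htop
      rcases hns M hnorm with h' | h'
      · exact coatom_ne_bot M hM h'
      · exact hM.1 h'
    · exact h.symm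
  -- distinct coatoms intersect trivially
  have trivial_inter : ∀ M1 M2 : Subgroup G, IsCoatom M1 → IsCoatom M2 → M1 ≠ M2 →
      M1 ⊓ M2 = ⊥ := by
    by_contra hcon
    push_neg at hcon
    obtain ⟨M1, M2, hM1, hM2, hne, hbot⟩ := hcon
    set S : Set (Subgroup G) :=
      {K | K ≠ ⊥ ∧ ∃ N1 N2 : Subgroup G, IsCoatom N1 ∧ IsCoatom N2 ∧ N1 ≠ N2 ∧ K = N1 ⊓ N2}
      with hSdef
    have hSne : S.Nonempty := ⟨M1 ⊓ M2, hbot, M1, M2, hM1, hM2, hne, rfl⟩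
    obtain ⟨D, hDS, hDmax⟩ := Set.Finite.exists_maximalFor id S (Set.toFinite S) hSne
    simp only [id] at hDmax
    obtain ⟨hDbot, N1, N2, hN1, hN2, hNne, hDeq⟩ := hDS
    -- D is strictly below each of N1, N2
    have hlt : ∀ {A B : Subgroup G}, IsCoatom A → IsCoatom B → A ≠ B → A ⊓ B < A := by
      intro A B hA hB hAB
      rcases (inf_le_left : A ⊓ B ≤ A).lt_or_eq with h | h
      · exact h
      · exfalso
        have hle : A ≤ B := inf_eq_left.mp h
        rcases hle.lt_or_eq with h' | h'
        · exact hB.1 (hA.2 _ h')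
        · exact hAB h'
    have hD1 : D < N1 := hDeq ▸ hlt hN1 hN2 hNne
    have hD2 : D < N2 := by
      rw [hDeq, inf_comm]
      exact hlt hN2 hN1 hNne.symm
    have hDtop : normalizer (D : Set G) ≠ ⊤ := by
      intro h
      have : D.Normal := Subgroup.normalizer_eq_top_iff.mp h
      rcases hns D this with h' | h'
      · exact hDbot h'
      · rw [h'] at hD1
        exact (lt_irrefl _ (lt_of_le_of_lt le_top hD1))
    obtain ⟨M3, hM3, hNle⟩ := (eq_top_or_exists_le_coatom (normalizer (D : Set G))).resolve_left hDtop
    -- key claim : any coatom strictly above D equals M3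
    have key : ∀ M : Subgroup G, IsCoatom M → D < M → M = M3 := by
      intro M hM hDM
      haveI : Group.IsNilpotent M := hnil M hM.1
      have hsubof : D.subgroupOf M < ⊤ := by
        rw [lt_top_iff_ne_top]
        intro h
        exact absurd (Subgroup.subgroupOf_eq_top.mp h) (not_le_of_gt hDM)
      have hnc := normalizerCondition_of_isNilpotent (G := M) _ hsubof
      set E : Subgroup G := map M.subtype (normalizer ((D.subgroupOf M : Set M))) with hEdef
      have hDE : D < E := by
        have h1 : map M.subtype (D.subgroupOf M) = D := by
          rw [Subgroup.subgroupOf_map_subtype, inf_eq_left.mpr hDM.le]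
        calc D = map M.subtype (D.subgroupOf M) := h1.symm
          _ < E := by
            apply lt_of_le_of_ne (Subgroup.map_mono hnc.le)
            intro h
            exact (ne_of_lt hnc) (Subgroup.map_injective M.subtype_injective h)
      have hEM : E ≤ M := Subgroup.map_subtype_le _
      have hEN : E ≤ normalizer (D : Set G) := map_normalizer_subgroupOf_le hDM.le
      by_contra hMM3
      have hmem : M ⊓ M3 ∈ S := by
        refine ⟨?_, M, M3, hM, hM3, hMM3, rfl⟩
        intro h
        have : D ≤ M ⊓ M3 := le_inf hDM.le (le_trans Subgroup.le_normalizer hNle)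
        rw [h, le_bot_iff] at this
        exact hDbot this
      have hDle : D ≤ M ⊓ M3 := le_inf hDM.le (le_trans Subgroup.le_normalizer hNle)
      have hEle : E ≤ M ⊓ M3 := le_inf hEM (le_trans hEN hNle)
      have := le_antisymm hDle (hDmax hmem hDle)
      rw [← this] at hEle
      exact (not_le_of_gt hDE) hEle
    exact hNne ((key N1 hN1 hD1).trans (key N2 hN2 hD2).symm)
  -- every nonidentity element lies in a coatom
  have hex : ∀ x : G, x ≠ 1 → ∃ M : Subgroup G, IsCoatom M ∧ x ∈ M := by
    intro x hx
    rcases eq_top_or_exists_le_coatom (zpowers x) with h | ⟨M, hM, hle⟩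
    · exact absurd h (hcyc x)
    · exact ⟨M, hM, hle (Subgroup.mem_zpowers x)⟩
  set f : G → Subgroup G :=
    fun x => if h : ∃ M : Subgroup G, IsCoatom M ∧ x ∈ M then h.choose else ⊤ with hfdef
  have hf1 : ∀ x : G, x ≠ 1 → IsCoatom (f x) ∧ x ∈ f x := by
    intro x hx
    have h := hex x hx
    simp only [hfdef, dif_pos h]
    exact h.choose_spec
  have huniq : ∀ x : G, x ≠ 1 → ∀ M : Subgroup G, IsCoatom M → x ∈ M → f x = M := by
    intro x hx M hM hxM
    by_contra hne
    have h0 := trivial_inter _ _ (hf1 x hx).1 hM hne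
    have : x ∈ (⊥ : Subgroup G) := h0 ▸ (Subgroup.mem_inf.mpr ⟨(hf1 x hx).2, hxM⟩)
    exact hx (Subgroup.mem_bot.mp this)
  set 𝓜 : Finset (Subgroup G) := Finset.univ.filter IsCoatom with h𝓜
  set n := Nat.card G with hn
  have hn1 : 1 ≤ n := Nat.one_le_iff_ne_zero.mpr Nat.card_pos.ne'
  -- main counting identity
  have hcount : n - 1 = ∑ M ∈ 𝓜, (Nat.card M - 1) := by
    have hfib : ∀ x ∈ Finset.univ.erase (1 : G), f x ∈ 𝓜 := by
      intro x hx
      rw [Finset.mem_erase] at hx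
      rw [h𝓜, Finset.mem_filter]
      exact ⟨Finset.mem_univ _, (hf1 x hx.1).1⟩
    have h1 := Finset.card_eq_sum_card_fiberwise hfib
    have hcard1 : (Finset.univ.erase (1 : G)).card = n - 1 := by
      rw [Finset.card_erase_of_mem (Finset.mem_univ _), Finset.card_univ, hn,
        Nat.card_eq_fintype_card]
    rw [← hcard1, h1]
    apply Finset.sum_congr rfl
    intro M hM
    rw [h𝓜, Finset.mem_filter] at hM
    have hfibeq : (Finset.univ.erase (1 : G)).filter (fun x => f x = M)
        = (Finset.univ.filter (· ∈ M)).erase 1 := by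
      ext x
      simp only [Finset.mem_filter, Finset.mem_erase, Finset.mem_univ, true_and, and_true]
      constructor
      · rintro ⟨hx1, hfx⟩
        exact ⟨hx1, hfx ▸ (hf1 x hx1).2⟩
      · rintro ⟨hx1, hxM⟩
        exact ⟨hx1, huniq x hx1 M hM.2 hxM⟩
    rw [hfibeq, Finset.card_erase_of_mem (by simp [Subgroup.one_mem]),
      ← Fintype.card_subtype, ← Nat.card_eq_fintype_card]
  -- orbit computations
  have orbit_card : ∀ M : Subgroup G, IsCoatom M →
      Nat.card (MulAction.orbit (ConjAct G) M) = M.index := by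
    intro M hM
    have h1 : Nat.card (MulAction.orbit (ConjAct G) M)
        = (MulAction.stabilizer (ConjAct G) M).index :=
      Nat.card_congr (MulAction.orbitEquivQuotientStabilizer (ConjAct G) M)
    rw [h1, stab_eq_comap_normalizer, coatom_selfnorm M hM, Subgroup.index_comap,
      MonoidHom.range_eq_top_of_surjective _ (MulEquiv.surjective _),
      Subgroup.relIndex_top_right]
  -- sum over an orbit
  have orbit_sum : ∀ M : Subgroup G, IsCoatom M →
      ∑ M' ∈ (Set.toFinite (MulAction.orbit (ConjAct G) M)).toFinset, (Nat.card M' - 1)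
        = M.index * (Nat.card M - 1) := by
    intro M hM
    have hconst : ∀ M' ∈ (Set.toFinite (MulAction.orbit (ConjAct G) M)).toFinset,
        (Nat.card M' - 1) = (Nat.card M - 1) := by
      intro M' hM'
      rw [Set.Finite.mem_toFinset] at hM'
      obtain ⟨g, rfl⟩ := hM'
      rw [card_conj]
    rw [Finset.sum_congr rfl hconst, Finset.sum_const, smul_eq_mul]
    congr 1
    rw [← Set.ncard_eq_toFinset_card _ (Set.toFinite _), ← Nat.card_coe_set_eq,
      orbit_card M hM]
  have orbit_subset : ∀ M : Subgroup G, IsCoatom M →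
      (Set.toFinite (MulAction.orbit (ConjAct G) M)).toFinset ⊆ 𝓜 := by
    intro M hM M' hM'
    rw [Set.Finite.mem_toFinset] at hM'
    obtain ⟨g, rfl⟩ := hM'
    rw [h𝓜, Finset.mem_filter]
    exact ⟨Finset.mem_univ _, isCoatom_conj hM g⟩
  -- facts about index and card of a coatom
  have coatom_facts : ∀ M : Subgroup G, IsCoatom M →
      2 ≤ M.index ∧ 2 ≤ Nat.card M ∧ M.index * Nat.card M = n := by
    intro M hM
    have h1 : M.index ≠ 1 := fun h => hM.1 (Subgroup.index_eq_one.mp h)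
    have h2 : M.index ≠ 0 := Subgroup.index_ne_zero_of_finite
    have h3 : 2 ≤ Nat.card M := (Subgroup.one_lt_card_iff_ne_bot M).mpr (coatom_ne_bot M hM)
    exact ⟨by omega, h3, Subgroup.index_mul_card M⟩
  -- pick a coatom
  obtain ⟨x0, hx0⟩ := exists_ne (1 : G)
  obtain ⟨M0, hM0, _⟩ := hex x0 hx0
  set o0 := (Set.toFinite (MulAction.orbit (ConjAct G) M0)).toFinset with ho0
  by_cases hall : 𝓜 ⊆ o0
  · -- single orbit: contradiction
    have heq : o0 = 𝓜 := Finset.Subset.antisymm (orbit_subset M0 hM0) hall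
    have h1 : n - 1 = M0.index * (Nat.card M0 - 1) := by
      rw [hcount, ← heq, orbit_sum M0 hM0]
    obtain ⟨hi, hc, hic⟩ := coatom_facts M0 hM0
    have hpc : Nat.card M0 - 1 + 1 = Nat.card M0 := Nat.sub_add_cancel (by omega)
    have h2 : M0.index * (Nat.card M0 - 1) + M0.index = M0.index * Nat.card M0 := by
      calc M0.index * (Nat.card M0 - 1) + M0.index
          = M0.index * (Nat.card M0 - 1 + 1) := by ring
        _ = M0.index * Nat.card M0 := by rw [hpc]
    omega
  · obtain ⟨M2', hM2'mem, hM2'o⟩ := Finset.not_subset.mp hall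
    rw [h𝓜, Finset.mem_filter] at hM2'mem
    have hM2' : IsCoatom M2' := hM2'mem.2
    set o2 := (Set.toFinite (MulAction.orbit (ConjAct G) M2')).toFinset with ho2
    have hdisj : Disjoint o0 o2 := by
      rw [Finset.disjoint_left]
      intro A hA0 hA2
      rw [ho0, Set.Finite.mem_toFinset] at hA0
      rw [ho2, Set.Finite.mem_toFinset] at hA2
      apply hM2'o
      rw [ho0, Set.Finite.mem_toFinset]
      have e1 : MulAction.orbit (ConjAct G) A = MulAction.orbit (ConjAct G) M0 :=
        MulAction.orbit_eq_iff.mpr hA0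
      have e2 : MulAction.orbit (ConjAct G) A = MulAction.orbit (ConjAct G) M2' :=
        MulAction.orbit_eq_iff.mpr hA2
      rw [← e1, e2]
      exact MulAction.mem_orbit_self _
    have hsub : o0 ∪ o2 ⊆ 𝓜 :=
      Finset.union_subset (orbit_subset M0 hM0) (orbit_subset M2' hM2')
    have hge : ∑ M ∈ 𝓜, (Nat.card M - 1)
        ≥ M0.index * (Nat.card M0 - 1) + M2'.index * (Nat.card M2' - 1) := by
      rw [← orbit_sum M0 hM0, ← orbit_sum M2' hM2', ← Finset.sum_union hdisj]
      exact Finset.sum_le_sum_of_subset hsub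
    obtain ⟨hi0, hc0, hic0⟩ := coatom_facts M0 hM0
    obtain ⟨hi2, hc2, hic2⟩ := coatom_facts M2' hM2'
    have hpc0 : Nat.card M0 - 1 + 1 = Nat.card M0 := Nat.sub_add_cancel (by omega)
    have hpc2 : Nat.card M2' - 1 + 1 = Nat.card M2' := Nat.sub_add_cancel (by omega)
    have h20 : M0.index * (Nat.card M0 - 1) + M0.index = n := by
      calc M0.index * (Nat.card M0 - 1) + M0.index
          = M0.index * (Nat.card M0 - 1 + 1) := by ring
        _ = n := by rw [hpc0]; exact hic0
    have h22 : M2'.index * (Nat.card M2' - 1) + M2'.index = n := by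
      calc M2'.index * (Nat.card M2' - 1) + M2'.index
          = M2'.index * (Nat.card M2' - 1 + 1) := by ring
        _ = n := by rw [hpc2]; exact hic2
    have hhalf0 : 2 * M0.index ≤ n := by
      calc 2 * M0.index ≤ Nat.card M0 * M0.index := Nat.mul_le_mul_right _ hc0
        _ = n := by rw [mul_comm]; exact hic0
    have hhalf2 : 2 * M2'.index ≤ n := by
      calc 2 * M2'.index ≤ Nat.card M2' * M2'.index := Nat.mul_le_mul_right _ hc2
        _ = n := by rw [mul_comm]; exact hic2
    omega

end Core

/-- Schmidt's theorem, part one, by strong induction on the order of the group. -/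
lemma schmidt_sol : ∀ (n : ℕ) (G : Type) [Group G] [Finite G], Nat.card G = n →
    (∀ H : Subgroup G, H ≠ ⊤ → Group.IsNilpotent H) → IsSolvable G := by
  intro n
  induction n using Nat.strong_induction_on with
  | _ n ih =>
    intro G _ _ hn hnil
    by_cases hcomm : ∀ a b : G, a * b = b * a
    · exact isSolvable_of_comm hcomm
    by_cases hns : ∀ N : Subgroup G, N.Normal → N = ⊥ ∨ N = ⊤
    · exact (schmidt_core G hnil hns hcomm).elim
    push_neg at hns
    obtain ⟨N, hNnorm, hNne⟩ := hns
    have hNbot : N ≠ ⊥ := hNne.1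
    have hNtop : N ≠ ⊤ := hNne.2
    haveI : N.Normal := hNnorm
    haveI : Group.IsNilpotent N := hnil N hNtop
    haveI hsolN : Group.IsSolvable N := inferInstance
    -- the quotient is solvable by the induction hypothesis
    have hq : Nat.card (G ⧸ N) < n := by
      have h1 : Nat.card G = Nat.card (G ⧸ N) * Nat.card N :=
        Subgroup.card_eq_card_quotient_mul_card_subgroup N
      have h2 : 2 ≤ Nat.card N := (Subgroup.one_lt_card_iff_ne_bot N).mpr hNbot
      have h3 : 1 ≤ Nat.card (G ⧸ N) := Nat.one_le_iff_ne_zero.mpr Nat.card_pos.ne'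
      have h4 : Nat.card (G ⧸ N) < Nat.card G := by
        rw [h1]
        exact lt_mul_iff_one_lt_right (by omega) |>.mpr (by omega)
      omega
    have hquotnil : ∀ H' : Subgroup (G ⧸ N), H' ≠ ⊤ → Group.IsNilpotent H' := by
      intro H' hH'
      have hK : (H'.comap (QuotientGroup.mk' N)) ≠ ⊤ := by
        intro h
        apply hH'
        have := Subgroup.map_comap_eq_self_of_surjective
          (QuotientGroup.mk'_surjective N) H'
        rw [← this, h, ← MonoidHom.range_eq_map,
          MonoidHom.range_eq_top_of_surjective _ (QuotientGroup.mk'_surjective N)]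
      haveI : Group.IsNilpotent (H'.comap (QuotientGroup.mk' N)) := hnil _ hK
      have heq : (H'.comap (QuotientGroup.mk' N)).map (QuotientGroup.mk' N) = H' :=
        Subgroup.map_comap_eq_self_of_surjective (QuotientGroup.mk'_surjective N) H'
      haveI : Group.IsNilpotent ((H'.comap (QuotientGroup.mk' N)).map (QuotientGroup.mk' N)) :=
        nilpotent_of_surjective _ (MonoidHom.subgroupMap_surjective _ _)
      exact heq ▸ this
    haveI hsolQ : Group.IsSolvable (G ⧸ N) := ih _ hq (G ⧸ N) rfl hquotnil
    exact solvable_of_ker_le_range N.subtype (QuotientGroup.mk' N)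
      (by rw [QuotientGroup.ker_mk', Subgroup.range_subtype])

/-- Schmidt's theorem, part two, by strong induction on the order of the group. -/
lemma schmidt_sub : ∀ (n : ℕ) (G : Type) [Group G] [Finite G], Nat.card G = n →
    ¬ Group.IsNilpotent G → ∃ D : Subgroup G, IsSolvable D ∧ ¬ Group.IsNilpotent D := by
  intro n
  induction n using Nat.strong_induction_on with
  | _ n ih =>
    intro G _ _ hn hG
    by_cases hnil : ∀ H : Subgroup G, H ≠ ⊤ → Group.IsNilpotent H
    · haveI : Group.IsSolvable G := schmidt_sol _ G rfl hnil
      refine ⟨⊤, (inferInstance : Group.IsSolvable _), fun h => hG ?_⟩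
      haveI := h
      exact nilpotent_of_mulEquiv Subgroup.topEquiv
    · push_neg at hnil
      obtain ⟨H, hHtop, hHnotnil⟩ := hnil
      have hcard : Nat.card H < n := by
        rcases lt_or_eq_of_le (Subgroup.card_le_card_group H) with h | h
        · omega
        · exact absurd (Subgroup.eq_top_of_card_eq H (hn ▸ h)) hHtop
      obtain ⟨D', hD'sol, hD'nil⟩ := ih _ hcard H rfl hHnotnil
      have e : D' ≃* (D'.map H.subtype) :=
        Subgroup.equivMapOfInjective D' H.subtype H.subtype_injective
      haveI : Group.IsSolvable D' := hD'sol
      refine ⟨D'.map H.subtype, ?_, ?_⟩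
      · exact solvable_of_surjective (f := e.toMonoidHom) e.surjective
      · intro h
        haveI := h
        exact hD'nil (nilpotent_of_mulEquiv e.symm)

theorem minimal_non_nilpotent_solvable :
    (∀ (G : Type) [Group G] [Finite G], ¬ Group.IsNilpotent G →
      (∀ H : Subgroup G, H ≠ ⊤ → Group.IsNilpotent H) → IsSolvable G) ∧
    (∀ (G : Type) [Group G] [Finite G], ¬ Group.IsNilpotent G →
      ∃ D : Subgroup G, IsSolvable D ∧ ¬ Group.IsNilpotent D) := by
  constructor
  · intro G _ _ _ hsub
    exact schmidt_sol _ G rfl hsub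
  · intro G _ _ hG
    exact schmidt_sub _ G rfl hG
end

section
/- Let G be a finite group, P a normal p-subgroup of G, and H a subgroup with G = PH and G = [G,G]. Then G = [P,H]H. -/
open Subgroup
open scoped commutatorElement

lemma aux_perfect_nilpotent_trivial {G : Type*} [Group G] [Group.IsNilpotent G]
    (h : commutator G = ⊤) : ∀ g : G, g = 1 := by
  have hall : ∀ n, Subgroup.lowerCentralSeries (⊤ : Subgroup G) n = ⊤ := by
    intro n
    induction n with
    | zero => exact Subgroup.lowerCentralSeries_zero (S := (⊤ : Subgroup G))
    | succ n ih =>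
      have : commutator G ≤ Subgroup.lowerCentralSeries (⊤ : Subgroup G) (n + 1) := by
        rw [_root_.commutator_def, Subgroup.commutator_def, Subgroup.lowerCentralSeries_succ, ih]
        apply Subgroup.closure_mono
        rintro x ⟨p, hp, q, hq, rfl⟩
        exact ⟨p, trivial, q, trivial, (commutatorElement_def p q).symm⟩
      rw [h] at this
      exact top_le_iff.mp this
  obtain ⟨n, hn⟩ := Subgroup.nilpotent_iff_lowerCentralSeries.mp ‹Group.IsNilpotent G›
  rw [hall n] at hn
  intro g
  have := hn ▸ (Subgroup.mem_top g)
  simpa [Subgroup.mem_bot] using this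

theorem perfect_eq_commutator_mul {p : ℕ} (hp : p.Prime) {G : Type*} [Group G] [Finite G]
    (P : Subgroup G) [P.Normal] (hPp : IsPGroup p P) (H : Subgroup G)
    (hPH : ∀ g : G, ∃ x ∈ P, ∃ h ∈ H, g = x * h)
    (hperf : commutator G = ⊤) :
    ∀ g : G, ∃ x ∈ ⁅P, H⁆, ∃ h ∈ H, g = x * h := by
  set N := ⁅P, H⁆ with hNdef
  -- H-conjugation preserves N
  have hHconj : ∀ h ∈ H, ∀ n ∈ N, h * n * h⁻¹ ∈ N := by
    intro h hh n hn
    rw [hNdef, Subgroup.commutator_def] at hn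
    refine Subgroup.closure_induction (fun x hx => ?_) (by simpa using one_mem N)
      (fun a b _ _ ha hb => by simpa [mul_assoc] using mul_mem ha hb)
      (fun a _ ha => by simpa [mul_assoc] using inv_mem ha) hn
    obtain ⟨a, haP, b, hbH, rfl⟩ := hx
    have : h * ⁅a, b⁆ * h⁻¹ = ⁅h * a * h⁻¹, h * b * h⁻¹⁆ := by
      simp only [commutatorElement_def]; group
    rw [this]
    exact commutator_mem_commutator (‹P.Normal›.conj_mem a haP h) (mul_mem (mul_mem hh hbH) (inv_mem hh))
  -- P-conjugation preserves N
  have hPconj : ∀ x ∈ P, ∀ n ∈ N, x * n * x⁻¹ ∈ N := by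
    intro x hx n hn
    rw [hNdef, Subgroup.commutator_def] at hn
    refine Subgroup.closure_induction (fun y hy => ?_) (by simpa using one_mem N)
      (fun a b _ _ ha hb => by simpa [mul_assoc] using mul_mem ha hb)
      (fun a _ ha => by simpa [mul_assoc] using inv_mem ha) hn
    obtain ⟨a, haP, b, hbH, rfl⟩ := hy
    have key : x * ⁅a, b⁆ * x⁻¹ = ⁅x * a, b⁆ * ⁅x, b⁆⁻¹ := by
      simp only [commutatorElement_def]; group
    rw [key]
    exact mul_mem (commutator_mem_commutator (mul_mem hx haP) hbH)
      (inv_mem (commutator_mem_commutator hx hbH))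
  have hNnormal : N.Normal := by
    constructor
    intro n hn g
    obtain ⟨x, hxP, h, hhH, rfl⟩ := hPH g
    have : x * h * n * (x * h)⁻¹ = x * (h * n * h⁻¹) * x⁻¹ := by group
    rw [this]
    exact hPconj x hxP _ (hHconj h hhH n hn)
  haveI := hNnormal
  set Q := N ⊔ H with hQdef
  have hHQ : H ≤ Q := le_sup_right
  have hNQ : N ≤ Q := le_sup_left
  have hQnormal : Q.Normal := by
    constructor
    intro q hq g
    rw [hQdef, ← Subgroup.closure_eq N, ← Subgroup.closure_eq H, ← Subgroup.closure_union] at hq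
    refine Subgroup.closure_induction (fun y hy => ?_) (by simpa using one_mem Q)
      (fun a b _ _ ha hb => by simpa [mul_assoc] using mul_mem ha hb)
      (fun a _ ha => by simpa [mul_assoc] using inv_mem ha) hq
    rcases hy with hyN | hyH
    · exact hNQ (hNnormal.conj_mem y hyN g)
    · obtain ⟨x, hxP, h, hhH, rfl⟩ := hPH g
      have e1 : x * h * y * (x * h)⁻¹ = x * (h * y * h⁻¹) * x⁻¹ := by group
      rw [e1]
      set y' := h * y * h⁻¹ with hy'
      have hy'H : y' ∈ H := mul_mem (mul_mem hhH hyH) (inv_mem hhH)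
      have e2 : x * y' * x⁻¹ = ⁅x, y'⁆ * y' := by
        simp only [commutatorElement_def]; group
      rw [e2]
      exact mul_mem (hNQ (commutator_mem_commutator hxP hy'H)) (hHQ hy'H)
  haveI := hQnormal
  -- the quotient is a p-group
  have hpq : IsPGroup p (G ⧸ Q) := by
    intro gb
    obtain ⟨g, rfl⟩ := QuotientGroup.mk_surjective gb
    obtain ⟨x, hxP, h, hhH, rfl⟩ := hPH g
    obtain ⟨k, hk⟩ := hPp ⟨x, hxP⟩
    refine ⟨k, ?_⟩
    have hx : x ^ p ^ k = 1 := by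
      have := congrArg (Subtype.val) hk
      simpa using this
    have hmk : (QuotientGroup.mk (x * h) : G ⧸ Q) = QuotientGroup.mk x := by
      rw [QuotientGroup.eq]
      have : (x * h)⁻¹ * x = h⁻¹ := by group
      rw [this]
      exact inv_mem (hHQ hhH)
    rw [hmk, ← QuotientGroup.mk_pow, hx]
    rfl
  -- the quotient is perfect
  have hqperf : commutator (G ⧸ Q) = ⊤ := by
    have hsurj : Function.Surjective (QuotientGroup.mk' Q) := QuotientGroup.mk'_surjective Q
    calc commutator (G ⧸ Q) = ⁅(⊤ : Subgroup (G ⧸ Q)), ⊤⁆ := rfl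
      _ = ⁅Subgroup.map (QuotientGroup.mk' Q) ⊤, Subgroup.map (QuotientGroup.mk' Q) ⊤⁆ := by
          rw [Subgroup.map_top_of_surjective _ hsurj]
      _ = Subgroup.map (QuotientGroup.mk' Q) (commutator G) := (Subgroup.map_commutator ⊤ ⊤ _).symm
      _ = ⊤ := by rw [hperf, Subgroup.map_top_of_surjective _ hsurj]
  haveI : Fact p.Prime := ⟨hp⟩
  haveI : Group.IsNilpotent (G ⧸ Q) := hpq.isNilpotent
  have htriv := aux_perfect_nilpotent_trivial hqperf
  have hQtop : ∀ g : G, g ∈ Q := by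
    intro g
    have : (QuotientGroup.mk g : G ⧸ Q) = 1 := htriv _
    exact (QuotientGroup.eq_one_iff g).mp this
  -- decompose
  intro g
  have hg : g ∈ (↑(N ⊔ H) : Set G) := hQtop g
  rw [Subgroup.normal_mul] at hg
  obtain ⟨x, hx, h, hh, rfl⟩ := hg
  exact ⟨x, hx, h, hh, rfl⟩
end
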